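/- Let A ⊂ ℝⁿ be a finite set and f_A(x) = log(Σ_{a∈A} c_a exp(aᵀx)) with all c_a > 0. Then f_A is strictly convex on ℝⁿ if and only if the vectors in A form an affine generating family of ℝⁿ (i.e., the affine span of A is all of ℝⁿ). -/

import Mathlib

open Finset Real

lemma cs_strict {ι : Type*} (B : Finset ι) (w t : ι → ℝ)
    (hw : ∀ a ∈ B, 0 < w a) (hne : ∃ a ∈ B, ∃ b ∈ B, t a ≠ t b) :
    (∑ a ∈ B, w a * t a) ^ 2 < (∑ a ∈ B, w a) * (∑ a ∈ B, w a * t a ^ 2) := by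
  obtain ⟨a0, ha0, b0, hb0, hab⟩ := hne
  set W := ∑ a ∈ B, w a with hW
  set M1 := ∑ a ∈ B, w a * t a with hM1
  set M2 := ∑ a ∈ B, w a * t a ^ 2 with hM2
  have inner : ∀ a ∈ B, ∑ b ∈ B, w a * w b * (t a - t b) ^ 2
      = w a * t a ^ 2 * W - 2 * (w a * t a) * M1 + w a * M2 := by
    intro a _
    rw [hW, hM1, hM2, Finset.mul_sum, Finset.mul_sum, Finset.mul_sum, ← Finset.sum_sub_distrib,
      ← Finset.sum_add_distrib]
    exact Finset.sum_congr rfl fun b _ => by ring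
  have key : ∑ a ∈ B, ∑ b ∈ B, w a * w b * (t a - t b) ^ 2 = 2 * (W * M2 - M1 ^ 2) := by
    rw [Finset.sum_congr rfl inner, Finset.sum_add_distrib, Finset.sum_sub_distrib,
      ← Finset.sum_mul, ← Finset.sum_mul, ← Finset.sum_mul, ← hW, ← hM2]
    have h1 : ∑ a ∈ B, w a * t a ^ 2 = M2 := hM2.symm
    have h2 : (∑ a ∈ B, 2 * (w a * t a)) = 2 * M1 := by
      rw [← Finset.mul_sum, ← hM1]
    rw [h2]
    ring
  have hpos : 0 < ∑ a ∈ B, ∑ b ∈ B, w a * w b * (t a - t b) ^ 2 := by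
    refine Finset.sum_pos' (fun a ha => Finset.sum_nonneg fun b hb =>
      mul_nonneg (mul_nonneg (hw a ha).le (hw b hb).le) (sq_nonneg _)) ?_
    refine ⟨a0, ha0, Finset.sum_pos' (fun b hb =>
      mul_nonneg (mul_nonneg (hw a0 ha0).le (hw b hb).le) (sq_nonneg _)) ⟨b0, hb0, ?_⟩⟩
    exact mul_pos (mul_pos (hw a0 ha0) (hw b0 hb0))
      (pow_pos (abs_pos.mpr (sub_ne_zero.mpr hab)) 2 |>.trans_le (by rw [sq_abs]))
  nlinarith [key, hpos]

lemma lse1d_strictConvex {ι : Type*} (B : Finset ι) (w t : ι → ℝ)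
    (hw : ∀ a ∈ B, 0 < w a) (hne : ∃ a ∈ B, ∃ b ∈ B, t a ≠ t b) :
    StrictConvexOn ℝ Set.univ (fun s => Real.log (∑ a ∈ B, w a * Real.exp (t a * s))) := by
  obtain ⟨a0, ha0, -⟩ := id hne
  set S : ℝ → ℝ := fun s => ∑ a ∈ B, w a * Real.exp (t a * s) with hSdef
  set S1 : ℝ → ℝ := fun s => ∑ a ∈ B, w a * t a * Real.exp (t a * s) with hS1def
  set S2 : ℝ → ℝ := fun s => ∑ a ∈ B, w a * t a ^ 2 * Real.exp (t a * s) with hS2def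
  have hS : ∀ s, 0 < S s := fun s =>
    Finset.sum_pos' (fun a ha => (mul_pos (hw a ha) (Real.exp_pos _)).le)
      ⟨a0, ha0, mul_pos (hw a0 ha0) (Real.exp_pos _)⟩
  have hdS : ∀ s, HasDerivAt S (S1 s) s := by
    intro s
    refine HasDerivAt.fun_sum fun a ha => ?_
    have h1 : HasDerivAt (fun s : ℝ => t a * s) (t a) s := by
      simpa using (hasDerivAt_id s).const_mul (t a)
    have h2 := (h1.exp).const_mul (w a)
    convert h2 using 1; rfl; ring
  have hdS1 : ∀ s, HasDerivAt S1 (S2 s) s := by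
    intro s
    refine HasDerivAt.fun_sum fun a ha => ?_
    have h1 : HasDerivAt (fun s : ℝ => t a * s) (t a) s := by
      simpa using (hasDerivAt_id s).const_mul (t a)
    have h2 := (h1.exp).const_mul (w a * t a)
    convert h2 using 1; rfl; ring
  have hg : ∀ s, HasDerivAt (fun s => Real.log (S s)) (S1 s / S s) s :=
    fun s => (hdS s).log (hS s).ne'
  have hderiv1 : deriv (fun s => Real.log (S s)) = fun s => S1 s / S s :=
    funext fun s => (hg s).deriv
  have hg2 : ∀ s, HasDerivAt (fun s => S1 s / S s)
      ((S2 s * S s - S1 s * S1 s) / S s ^ 2) s :=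
    fun s => (hdS1 s).div (hdS s) (hS s).ne'
  apply strictConvexOn_univ_of_deriv2_pos
  · exact continuous_iff_continuousAt.mpr fun s => (hg s).differentiableAt.continuousAt
  · intro s
    have : deriv^[2] (fun s => Real.log (S s)) s = (S2 s * S s - S1 s * S1 s) / S s ^ 2 := by
      show deriv (deriv (fun s => Real.log (S s))) s = _
      rw [hderiv1]
      exact (hg2 s).deriv
    rw [this]
    apply div_pos _ (pow_pos (hS s) 2)
    have hcs := cs_strict B (fun a => w a * Real.exp (t a * s)) t
      (fun a ha => mul_pos (hw a ha) (Real.exp_pos _)) hne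
    have e0 : S s = ∑ a ∈ B, w a * Real.exp (t a * s) := rfl
    have e1 : S1 s = ∑ a ∈ B, (w a * Real.exp (t a * s)) * t a :=
      Finset.sum_congr rfl fun a _ => by ring
    have e2 : S2 s = ∑ a ∈ B, (w a * Real.exp (t a * s)) * t a ^ 2 :=
      Finset.sum_congr rfl fun a _ => by ring
    beta_reduce at hcs
    rw [e0, e1, e2]
    nlinarith [hcs]

theorem stmt4 {n : ℕ} (A : Finset (Fin n → ℝ)) (hA : A.Nonempty)
    (c : (Fin n → ℝ) → ℝ) (hc : ∀ a ∈ A, 0 < c a)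
    (f : (Fin n → ℝ) → ℝ)
    (hf : ∀ x, f x = Real.log (∑ a ∈ A, c a * Real.exp (∑ i, a i * x i))) :
    StrictConvexOn ℝ Set.univ f ↔ affineSpan ℝ (A : Set (Fin n → ℝ)) = ⊤ := by
  have hAs : (A : Set (Fin n → ℝ)).Nonempty := Finset.coe_nonempty.mpr hA
  constructor
  · intro hconv
    by_contra hspan
    have hvs : vectorSpan ℝ (A : Set (Fin n → ℝ)) ≠ ⊤ := fun h => hspan
      ((AffineSubspace.affineSpan_eq_top_iff_vectorSpan_eq_top_of_nonempty ℝ (Fin n → ℝ) (Fin n → ℝ) hAs).mpr h)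
    obtain ⟨φ, hφ0, hφmap⟩ := Submodule.exists_dual_map_eq_bot_of_lt_top
      (p := vectorSpan ℝ (A : Set (Fin n → ℝ))) (lt_top_iff_ne_top.mpr hvs) inferInstance
    have hker : ∀ z ∈ vectorSpan ℝ (A : Set (Fin n → ℝ)), φ z = 0 := by
      intro z hz
      have h1 : φ z ∈ Submodule.map φ (vectorSpan ℝ (A : Set (Fin n → ℝ))) :=
        Submodule.mem_map_of_mem hz
      rw [hφmap] at h1
      simpa using h1
    obtain ⟨a0, ha0⟩ := hA
    have hconst : ∀ a ∈ A, φ a = φ a0 := by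
      intro a ha
      have h1 : a -ᵥ a0 ∈ vectorSpan ℝ (A : Set (Fin n → ℝ)) :=
        vsub_mem_vectorSpan ℝ (by exact_mod_cast ha) (by exact_mod_cast ha0)
      have h2 := hker _ h1
      rw [vsub_eq_sub, map_sub] at h2
      linarith
    set u : Fin n → ℝ := fun i => φ (fun j => if i = j then 1 else 0) with hu
    have hrep : ∀ z : Fin n → ℝ, ∑ i, z i * u i = φ z := by
      intro z
      rw [LinearMap.pi_apply_eq_sum_univ φ z]
      exact Finset.sum_congr rfl fun i _ => rfl
    have hu0 : u ≠ 0 := by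
      intro h
      apply hφ0
      refine LinearMap.ext fun z => ?_
      rw [← hrep z, h]
      simp
    have hcsum : (0:ℝ) < ∑ a ∈ A, c a := Finset.sum_pos' (fun a ha => (hc a ha).le)
      ⟨a0, ha0, hc a0 ha0⟩
    have hfline : ∀ s : ℝ, f (s • u) = s * φ a0 + Real.log (∑ a ∈ A, c a) := by
      intro s
      rw [hf]
      have h3 : ∀ a ∈ A, c a * Real.exp (∑ i, a i * (s • u) i)
          = c a * Real.exp (s * φ a0) := by
        intro a ha
        have h4 : ∑ i, a i * (s • u) i = s * ∑ i, a i * u i := by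
          rw [Finset.mul_sum]
          exact Finset.sum_congr rfl fun i _ => by
            simp only [Pi.smul_apply, smul_eq_mul]; ring
        rw [h4, hrep, hconst a ha]
      rw [Finset.sum_congr rfl h3, ← Finset.sum_mul,
        Real.log_mul hcsum.ne' (Real.exp_ne_zero _), Real.log_exp]
      ring
    have h2ne : (0 : Fin n → ℝ) ≠ (2 : ℝ) • u := by
      intro h
      apply hu0
      rcases smul_eq_zero.mp h.symm with h' | h'
      · norm_num at h'
      · exact h'
    have key := hconv.2 (Set.mem_univ (0 : Fin n → ℝ)) (Set.mem_univ ((2:ℝ) • u)) h2ne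
      (by norm_num : (0:ℝ) < 1/2) (by norm_num : (0:ℝ) < 1/2) (by norm_num)
    have e1 : (1/2 : ℝ) • (0 : Fin n → ℝ) + (1/2 : ℝ) • ((2:ℝ) • u) = u := by
      rw [smul_zero, zero_add, smul_smul]; norm_num
    rw [e1] at key
    have hv0 := hfline 0
    rw [zero_smul] at hv0
    have hv1 := hfline 1
    rw [one_smul] at hv1
    have hv2 := hfline 2
    rw [hv0, hv1, hv2] at key
    norm_num at key
    linarith
  · intro hspan
    refine ⟨convex_univ, ?_⟩
    intro x _ y _ hxy p q hp hq hpq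
    set v : Fin n → ℝ := y - x with hv
    have hvne : v ≠ 0 := sub_ne_zero.mpr (Ne.symm hxy)
    have hne : ∃ a ∈ A, ∃ b ∈ A, (∑ i, a i * v i) ≠ (∑ i, b i * v i) := by
      by_contra hall
      push_neg at hall
      set φ : (Fin n → ℝ) →ₗ[ℝ] ℝ := ∑ i, v i • (LinearMap.proj i) with hφ
      have hφapp : ∀ z : Fin n → ℝ, φ z = ∑ i, z i * v i := by
        intro z
        rw [hφ]
        simp only [LinearMap.sum_apply, LinearMap.smul_apply, LinearMap.proj_apply,
          smul_eq_mul]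
        exact Finset.sum_congr rfl fun i _ => mul_comm _ _
      have hvs : vectorSpan ℝ (A : Set (Fin n → ℝ)) = ⊤ :=
        (AffineSubspace.affineSpan_eq_top_iff_vectorSpan_eq_top_of_nonempty ℝ (Fin n → ℝ) (Fin n → ℝ)
          hAs).mp hspan
      have hle : vectorSpan ℝ (A : Set (Fin n → ℝ)) ≤ LinearMap.ker φ := by
        rw [vectorSpan_def]
        refine Submodule.span_le.mpr ?_
        rintro z hz
        rw [Set.mem_vsub] at hz
        obtain ⟨a, ha, b, hb, rfl⟩ := hz
        simp only [SetLike.mem_coe, LinearMap.mem_ker, vsub_eq_sub, map_sub]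
        rw [hφapp, hφapp]
        have := hall a (by exact_mod_cast ha) b (by exact_mod_cast hb)
        linarith
      have hmem : φ v = 0 := hle (hvs ▸ Submodule.mem_top)
      rw [hφapp] at hmem
      have h0 : ∀ i ∈ Finset.univ, v i * v i = 0 :=
        (Finset.sum_eq_zero_iff_of_nonneg (fun i _ => mul_self_nonneg _)).mp hmem
      apply hvne
      ext i
      exact mul_self_eq_zero.mp (h0 i (Finset.mem_univ i))
    have hg := lse1d_strictConvex A (fun a => c a * Real.exp (∑ i, a i * x i))
      (fun a => ∑ i, a i * v i)
      (fun a ha => mul_pos (hc a ha) (Real.exp_pos _)) hne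
    have hfg : ∀ s : ℝ, f (x + s • v)
        = Real.log (∑ a ∈ A, c a * Real.exp (∑ i, a i * x i)
            * Real.exp ((∑ i, a i * v i) * s)) := by
      intro s
      rw [hf]
      congr 1
      refine Finset.sum_congr rfl fun a ha => ?_
      rw [mul_assoc, ← Real.exp_add]
      congr 2
      rw [Finset.sum_mul, ← Finset.sum_add_distrib]
      exact Finset.sum_congr rfl fun i _ => by
        simp only [Pi.add_apply, Pi.smul_apply, hv, Pi.sub_apply, smul_eq_mul]; ring
    have key := hg.2 (Set.mem_univ (0:ℝ)) (Set.mem_univ (1:ℝ)) (by norm_num) hp hq hpq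
    beta_reduce at key
    rw [← hfg 0, ← hfg 1, ← hfg (p • (0:ℝ) + q • (1:ℝ))] at key
    have e0 : x + (0:ℝ) • v = x := by rw [zero_smul, add_zero]
    have e1 : x + (1:ℝ) • v = y := by rw [one_smul, hv]; abel
    have e2 : x + (p • (0:ℝ) + q • (1:ℝ)) • v = p • x + q • y := by
      have hp' : p = 1 - q := by linarith
      ext i
      simp only [Pi.add_apply, Pi.smul_apply, smul_eq_mul, hv, Pi.sub_apply, hp']
      ring
    rw [e0, e1, e2] at key
    exact key
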